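/- arXiv:1908.01433 — 3 statements merged into one kernel-verified Lean document; each statement's English description precedes it below -/
import Mathlib

section
/- (Hoffman's bound) Let G be a finite simple graph with at least one edge, let χ(G) be its chromatic number, and let λ(G) and λ_min(G) be the largest and smallest eigenvalues of its adjacency matrix. Then χ(G) ≥ 1 − λ(G)/λ_min(G). -/
open Matrix

section aux

variable {n : ℕ} {A : Matrix (Fin n) (Fin n) ℝ} (hA : A.IsHermitian)

private lemma hoffman_star_coe_eq_transpose :
    star (hA.eigenvectorUnitary : Matrix (Fin n) (Fin n) ℝ)
      = (hA.eigenvectorUnitary : Matrix (Fin n) (Fin n) ℝ)ᵀ := by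
  rw [Matrix.star_eq_conjTranspose, Matrix.conjTranspose_eq_transpose_of_trivial]

private lemma hoffman_quad_eq (y : Fin n → ℝ) :
    y ⬝ᵥ (A *ᵥ y) = ∑ i, hA.eigenvalues i *
      ((hA.eigenvectorUnitary : Matrix (Fin n) (Fin n) ℝ)ᵀ *ᵥ y) i ^ 2 := by
  set U : Matrix (Fin n) (Fin n) ℝ := (hA.eigenvectorUnitary : Matrix (Fin n) (Fin n) ℝ) with hUdef
  set z := Uᵀ *ᵥ y with hz
  have hspec := hA.spectral_theorem
  rw [Unitary.conjStarAlgAut_apply, hoffman_star_coe_eq_transpose] at hspec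
  conv_lhs => rw [hspec]
  rw [← Matrix.mulVec_mulVec, ← Matrix.mulVec_mulVec, Matrix.dotProduct_mulVec,
    ← Matrix.mulVec_transpose, ← hz]
  simp [Matrix.mulVec_diagonal, dotProduct, pow_two, mul_comm, mul_assoc, mul_left_comm]

private lemma hoffman_norm_eq (y : Fin n → ℝ) :
    y ⬝ᵥ y = ∑ i, ((hA.eigenvectorUnitary : Matrix (Fin n) (Fin n) ℝ)ᵀ *ᵥ y) i ^ 2 := by
  set U : Matrix (Fin n) (Fin n) ℝ := (hA.eigenvectorUnitary : Matrix (Fin n) (Fin n) ℝ) with hUdef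
  have hU : U * star U = 1 := (Matrix.mem_unitaryGroup_iff).mp hA.eigenvectorUnitary.2
  rw [hoffman_star_coe_eq_transpose] at hU
  have : ∑ i, (Uᵀ *ᵥ y) i ^ 2 = (Uᵀ *ᵥ y) ⬝ᵥ (Uᵀ *ᵥ y) := by
    simp [dotProduct, pow_two]
  rw [this, Matrix.dotProduct_mulVec, ← Matrix.mulVec_transpose, Matrix.transpose_transpose,
    Matrix.mulVec_mulVec, hU, Matrix.one_mulVec]

private lemma hoffman_quad_ge [Nonempty (Fin n)] (y : Fin n → ℝ) :
    (⨅ i, hA.eigenvalues i) * (y ⬝ᵥ y) ≤ y ⬝ᵥ (A *ᵥ y) := by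
  rw [hoffman_quad_eq hA y, hoffman_norm_eq hA y, Finset.mul_sum]
  refine Finset.sum_le_sum fun i _ => ?_
  exact mul_le_mul_of_nonneg_right (ciInf_le (Finite.bddBelow_range _) i) (sq_nonneg _)

end aux


/-- **Hoffman's bound.** For a finite simple graph `G` with at least one edge,
`χ(G) ≥ 1 - λ(G)/λ_min(G)`, where `λ(G)` and `λ_min(G)` are the largest and
smallest eigenvalues of the adjacency matrix of `G`. -/
theorem hoffman_bound (n : ℕ) (G : SimpleGraph (Fin n)) [DecidableRel G.Adj]
    (hE : ∃ a b, G.Adj a b)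
    (hA : (G.adjMatrix ℝ).IsHermitian) :
    ((G.chromaticNumber.toNat : ℝ)) ≥
      1 - (⨆ i, hA.eigenvalues i) / (⨅ i, hA.eigenvalues i) := by
  obtain ⟨a, b, hab⟩ := hE
  have : Nonempty (Fin n) := ⟨a⟩
  set A := G.adjMatrix ℝ with hAdef
  set lam := ⨆ i, hA.eigenvalues i with hlam
  set mu := ⨅ i, hA.eigenvalues i with hmu
  have hne : a ≠ b := G.ne_of_adj hab
  -- mu < 0
  have hmu_neg : mu < 0 := by
    have key := hoffman_quad_ge hA (Pi.single a 1 - Pi.single b 1)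
    have h1 : (Pi.single a 1 - Pi.single b 1 : Fin n → ℝ) ⬝ᵥ (Pi.single a 1 - Pi.single b 1) = 2 := by
      simp [dotProduct_sub, sub_dotProduct, dotProduct_single,
        single_dotProduct, Pi.single_apply, hne, hne.symm]
      ring
    have h2 : (Pi.single a 1 - Pi.single b 1 : Fin n → ℝ) ⬝ᵥ
        (A *ᵥ (Pi.single a 1 - Pi.single b 1)) = -2 := by
      simp [Matrix.mulVec_sub, dotProduct_sub, sub_dotProduct,
        Matrix.mulVec_single, dotProduct_single, single_dotProduct, hAdef,
        SimpleGraph.adjMatrix_apply, hab, hab.symm, G.irrefl, hne, hne.symm]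
      norm_num
    rw [h1, h2] at key
    linarith
  -- top eigenvector
  obtain ⟨j, hj⟩ : ∃ j, hA.eigenvalues j = lam := exists_eq_ciSup_of_finite
  set x : Fin n → ℝ := ⇑(hA.eigenvectorBasis j) with hxdef
  have hAx : A *ᵥ x = lam • x := by rw [hA.mulVec_eigenvectorBasis, hj]
  have hxx : x ⬝ᵥ x = 1 := by
    have hbn : ‖hA.eigenvectorBasis j‖ = 1 := hA.eigenvectorBasis.orthonormal.1 j
    have h := real_inner_self_eq_norm_sq (hA.eigenvectorBasis j)
    rw [hbn] at h
    rw [EuclideanSpace.inner_eq_star_dotProduct, star_trivial] at h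
    simpa [hxdef] using h
  -- coloring
  set k := G.chromaticNumber.toNat with hkdef
  have hcol : G.Colorable k := G.colorable_chromaticNumber_of_fintype
  obtain ⟨C⟩ := hcol
  have hkpos : 0 < k := by
    rcases Nat.eq_zero_or_pos k with h | h
    · exact ((Fin.cast h (C a)).elim0)
    · exact h
  set xc : Fin k → Fin n → ℝ := fun c i => if C i = c then x i else 0 with hxcdef
  set s : Fin k → ℝ := fun c => xc c ⬝ᵥ xc c with hsdef
  have hs_sum : ∑ c, s c = 1 := by
    rw [hsdef]
    simp only [dotProduct, hxcdef]
    rw [Finset.sum_comm, ← hxx]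
    refine Finset.sum_congr rfl fun i _ => ?_
    simp [dotProduct, ite_mul, mul_ite]
  have hxc_x : ∀ c, xc c ⬝ᵥ x = s c := by
    intro c
    simp only [dotProduct, hxcdef, hsdef]
    exact Finset.sum_congr rfl fun i _ => by by_cases h : C i = c <;> simp [h]
  have hx_xc : ∀ c, x ⬝ᵥ xc c = s c := by
    intro c
    rw [← hxc_x c]
    simp [dotProduct, mul_comm]
  have hquad0 : ∀ c, xc c ⬝ᵥ (A *ᵥ xc c) = 0 := by
    intro c
    simp only [dotProduct, Matrix.mulVec, dotProduct]
    refine Finset.sum_eq_zero fun i _ => ?_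
    rw [Finset.mul_sum]
    refine Finset.sum_eq_zero fun l _ => ?_
    by_cases hci : C i = c
    · by_cases hcl : C l = c
      · have hadj : ¬ G.Adj i l := fun hadj => C.valid hadj (by rw [hci, hcl])
        simp [hxcdef, hAdef, SimpleGraph.adjMatrix_apply, hadj]
      · simp [hxcdef, hcl]
    · simp [hxcdef, hci]
  have hAdot : ∀ v : Fin n → ℝ, x ⬝ᵥ (A *ᵥ v) = lam * (x ⬝ᵥ v) := by
    intro v
    rw [Matrix.dotProduct_mulVec, ← Matrix.mulVec_transpose]
    have hT : Aᵀ = A := by rw [hAdef]; exact G.transpose_adjMatrix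
    rw [hT, hAx, smul_dotProduct, smul_eq_mul]
  have hdotA : ∀ v : Fin n → ℝ, v ⬝ᵥ (A *ᵥ x) = lam * (v ⬝ᵥ x) := by
    intro v
    rw [hAx, dotProduct_smul, smul_eq_mul]
  -- per-color inequality
  have hc : ∀ c, mu * (1 - 2*(k:ℝ)*s c + (k:ℝ)^2 * s c) ≤ lam - 2*(k:ℝ)*lam*(s c) := by
    intro c
    have key := hoffman_quad_ge hA (x - (k:ℝ) • xc c)
    rw [Matrix.mulVec_sub, Matrix.mulVec_smul] at key
    simp only [dotProduct_sub, sub_dotProduct, smul_dotProduct,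
      dotProduct_smul, smul_eq_mul] at key
    simp only [hxx, hxc_x, hx_xc, hquad0, hAdot, hdotA] at key
    rw [← hmu] at key
    nlinarith [key]
  have key2 : (0:ℝ) ≤ ∑ c, ((lam - mu) + (2*(k:ℝ)*(mu - lam) - (k:ℝ)^2*mu) * s c) := by
    refine Finset.sum_nonneg fun c _ => ?_
    have := hc c
    nlinarith [this]
  have hsum : ∑ c, ((lam - mu) + (2*(k:ℝ)*(mu - lam) - (k:ℝ)^2*mu) * s c)
      = (k:ℝ)*(lam - mu) + (2*(k:ℝ)*(mu - lam) - (k:ℝ)^2*mu) := by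
    rw [Finset.sum_add_distrib, ← Finset.mul_sum, hs_sum, mul_one, Finset.sum_const,
      Finset.card_univ, Fintype.card_fin, nsmul_eq_mul]
  rw [hsum] at key2
  have hkR : (0:ℝ) < (k:ℝ) := by exact_mod_cast hkpos
  have hfinal : lam - mu ≤ -(k:ℝ)*mu := by nlinarith [key2, hkR]
  have hmu0 : mu ≠ 0 := ne_of_lt hmu_neg
  rw [ge_iff_le, show (1:ℝ) - lam/mu = (lam - mu)/(-mu) by
    rw [div_neg, eq_neg_iff_add_eq_zero]
    field_simp
    ring]
  rw [div_le_iff₀ (by linarith : (0:ℝ) < -mu)]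
  nlinarith [hfinal, hkR]
end

section
/- Let n ≥ 2 be an even integer, and let G be the 4-graph on 2n vertices whose vertex set is the disjoint union of sets A and B with |A| = |B| = n, and whose edges are all 4-element vertex sets intersecting A in exactly two vertices. Then for every real p ≥ 2, λ^(p)(G) = 4! · C(n,2)^2 / (2n)^{4/p}, where C(n,2) = n(n−1)/2. -/
open Finset

/-- Polynomial form of a weighted `r`-graph with edge set `E` and weights `w`:
`P(x) = r! * ∑_{e ∈ E} w(e) * ∏_{i ∈ e} x i`. -/
noncomputable def polyForm (r : ℕ) {V : Type*} (E : Finset (Finset V))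
    (w : Finset V → ℝ) (x : V → ℝ) : ℝ :=
  (r.factorial : ℝ) * ∑ e ∈ E, w e * ∏ i ∈ e, x i

/-- The ℓ^p norm of a vector. -/
noncomputable def lpNorm (p : ℝ) {V : Type*} [Fintype V] (x : V → ℝ) : ℝ :=
  (∑ i, |x i| ^ p) ^ (1 / p)

/-- `λ^(p)(G_w)`: the maximum of the polynomial form over the unit ℓ^p sphere. -/
noncomputable def lamMax (r : ℕ) (p : ℝ) {V : Type*} [Fintype V]
    (E : Finset (Finset V)) (w : Finset V → ℝ) : ℝ :=
  sSup {t | ∃ x : V → ℝ, lpNorm p x = 1 ∧ polyForm r E w x = t}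

/-- `λ_min^(p)(G_w)`: the minimum of the polynomial form over the unit ℓ^p sphere. -/
noncomputable def lamMin (r : ℕ) (p : ℝ) {V : Type*} [Fintype V]
    (E : Finset (Finset V)) (w : Finset V → ℝ) : ℝ :=
  sInf {t | ∃ x : V → ℝ, lpNorm p x = 1 ∧ polyForm r E w x = t}

/-- Edge set of the complete `r`-graph `K_k^r` on vertex set `Fin k`. -/
def completeEdges (r k : ℕ) : Finset (Finset (Fin k)) :=
  Finset.univ.powersetCard r

/-- The `4`-graph of Section 2 of the paper: the vertex set is the disjoint union
`A ⊕ B` of two sets of size `n` (`A` = left copy of `Fin n`, `B` = right copy), and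
the edges are all `4`-element vertex sets intersecting `A` in exactly two vertices. -/
def crossEdges (n : ℕ) : Finset (Finset (Fin n ⊕ Fin n)) :=
  (Finset.univ.powersetCard 4).filter
    (fun e => (e.filter (fun v => v.isLeft = true)).card = 2)

lemma pair_sum {ι : Type*} [DecidableEq ι] (u : Finset ι) (y : ι → ℝ) :
    2 * ∑ s ∈ u.powersetCard 2, ∏ i ∈ s, y i
      = (∑ i ∈ u, y i) ^ 2 - ∑ i ∈ u, y i ^ 2 := by
  induction u using Finset.induction with
  | empty =>
    rw [Finset.powersetCard_eq_empty.2 (by simp)]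
    simp
  | @insert a u ha ih =>
    have h1 : (insert a u).powersetCard 2 = u.powersetCard 2 ∪ (u.powersetCard 1).image (insert a) :=
      Finset.powersetCard_succ_insert ha 1
    have hdisj : Disjoint (u.powersetCard 2) ((u.powersetCard 1).image (insert a)) := by
      rw [Finset.disjoint_left]
      intro s hs hs'
      simp only [Finset.mem_image] at hs'
      obtain ⟨t, ht, rfl⟩ := hs'
      have := Finset.mem_powersetCard.1 hs
      exact ha (this.1 (Finset.mem_insert_self a t))
    have hinj : ∑ s ∈ (u.powersetCard 1).image (insert a), ∏ i ∈ s, y i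
        = ∑ t ∈ u.powersetCard 1, ∏ i ∈ insert a t, y i := by
      apply Finset.sum_image
      intro s hs t ht hst
      have hs' : a ∉ s := fun h => ha ((Finset.mem_powersetCard.1 hs).1 h)
      have ht' : a ∉ t := fun h => ha ((Finset.mem_powersetCard.1 ht).1 h)
      rw [← Finset.erase_insert hs', hst, Finset.erase_insert ht']
    have hone : ∑ t ∈ u.powersetCard 1, ∏ i ∈ insert a t, y i = y a * ∑ i ∈ u, y i := by
      rw [Finset.powersetCard_one, Finset.sum_map, Finset.mul_sum]
      apply Finset.sum_congr rfl
      intro i hi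
      have : a ∉ ({i} : Finset ι) := by
        simp only [Finset.mem_singleton]
        rintro rfl; exact ha hi
      show ∏ j ∈ insert a {i}, y j = y a * y i
      rw [Finset.prod_insert this, Finset.prod_singleton]
    rw [h1, Finset.sum_union hdisj, hinj, hone, Finset.sum_insert ha, Finset.sum_insert ha]
    ring_nf
    ring_nf at ih
    linarith [ih]

lemma filter_isLeft_eq (n : ℕ) (e : Finset (Fin n ⊕ Fin n)) :
    e.filter (fun v => v.isLeft = true) = e.toLeft.map ⟨Sum.inl, Sum.inl_injective⟩ := by
  ext v
  cases v with
  | inl a => simp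
  | inr b => simp

lemma cross_factor (n : ℕ) (x : Fin n ⊕ Fin n → ℝ) :
    ∑ e ∈ crossEdges n, ∏ i ∈ e, x i =
      (∑ s ∈ (Finset.univ : Finset (Fin n)).powersetCard 2, ∏ i ∈ s, x (Sum.inl i)) *
      (∑ t ∈ (Finset.univ : Finset (Fin n)).powersetCard 2, ∏ j ∈ t, x (Sum.inr j)) := by
  rw [Finset.sum_mul_sum]
  rw [← Finset.sum_product']
  apply Finset.sum_nbij' (fun e => (e.toLeft, e.toRight)) (fun st => st.1.disjSum st.2)
  · intro e he
    simp only [crossEdges, Finset.mem_filter, Finset.mem_powersetCard_univ] at he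
    obtain ⟨hc, hl⟩ := he
    rw [filter_isLeft_eq, Finset.card_map] at hl
    have hr : e.toRight.card = 2 := by
      have := Finset.card_toLeft_add_card_toRight (u := e)
      omega
    simp [Finset.mem_product, Finset.mem_powersetCard_univ, hl, hr]
  · intro st hst
    simp only [Finset.mem_product, Finset.mem_powersetCard_univ] at hst
    simp only [crossEdges, Finset.mem_filter, Finset.mem_powersetCard_univ]
    constructor
    · rw [Finset.card_disjSum, hst.1, hst.2]
    · rw [filter_isLeft_eq, Finset.card_map, Finset.toLeft_disjSum, hst.1]
  · intro e _; exact Finset.toLeft_disjSum_toRight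
  · intro st _; simp
  · intro e _
    conv_lhs => rw [← Finset.toLeft_disjSum_toRight (u := e)]
    rw [Finset.prod_disjSum]

lemma macl (n : ℕ) (hn : 1 ≤ n) (p : ℝ) (hp : 1 ≤ p) (y : Fin n → ℝ) (hy : ∀ i, 0 ≤ y i) :
    ∑ s ∈ (Finset.univ : Finset (Fin n)).powersetCard 2, ∏ i ∈ s, y i
      ≤ ((n : ℝ) * ((n : ℝ) - 1) / 2) * (∑ i, y i ^ p) ^ ((2:ℝ)/p) / (n : ℝ) ^ ((2:ℝ)/p) := by
  have hn0 : (0:ℝ) < n := by exact_mod_cast hn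
  have hp0 : (0:ℝ) < p := lt_of_lt_of_le one_pos hp
  set S := ∑ i, y i with hS
  set Q := ∑ i, y i ^ 2 with hQ
  set a := ∑ i, y i ^ p with ha
  have hS0 : 0 ≤ S := Finset.sum_nonneg fun i _ => hy i
  have ha0 : 0 ≤ a := Finset.sum_nonneg fun i _ => Real.rpow_nonneg (hy i) p
  have h1 : 2 * ∑ s ∈ (Finset.univ : Finset (Fin n)).powersetCard 2, ∏ i ∈ s, y i
      = S ^ 2 - Q := pair_sum _ y
  have h2 : S ^ 2 ≤ (n : ℝ) * Q := by
    have := sq_sum_le_card_mul_sum_sq (s := (Finset.univ : Finset (Fin n))) (f := y)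
    simpa using this
  have h3 : S ≤ (n : ℝ) ^ (1 - p⁻¹) * a ^ p⁻¹ := by
    have := Real.inner_le_weight_mul_Lp_of_nonneg (Finset.univ : Finset (Fin n)) hp
      (fun _ => 1) y (fun _ => zero_le_one) hy
    simpa using this
  have h4 : S ^ 2 ≤ ((n : ℝ) ^ (1 - p⁻¹) * a ^ p⁻¹) ^ 2 := pow_le_pow_left₀ hS0 h3 2
  have h5 : ((n : ℝ) ^ (1 - p⁻¹) * a ^ p⁻¹) ^ 2
      = (n : ℝ) ^ ((2:ℝ) - 2/p) * a ^ ((2:ℝ)/p) := by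
    rw [mul_pow, ← Real.rpow_natCast ((n:ℝ) ^ (1 - p⁻¹)) 2,
      ← Real.rpow_natCast (a ^ p⁻¹) 2, ← Real.rpow_mul hn0.le, ← Real.rpow_mul ha0]
    congr 1
    · congr 1
      push_cast
      ring
    · congr 1
      push_cast
      ring
  have h6 : (n : ℝ) ^ ((2:ℝ) - 2/p) = (n : ℝ) ^ 2 / (n : ℝ) ^ ((2:ℝ)/p) := by
    rw [Real.rpow_sub hn0, Real.rpow_two]
  have hnp : (0:ℝ) < (n : ℝ) ^ ((2:ℝ)/p) := Real.rpow_pos_of_pos hn0 _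
  have hap : (0:ℝ) ≤ a ^ ((2:ℝ)/p) := Real.rpow_nonneg ha0 _
  have h7 : S ^ 2 ≤ (n : ℝ) ^ 2 * a ^ ((2:ℝ)/p) / (n : ℝ) ^ ((2:ℝ)/p) := by
    calc S ^ 2 ≤ ((n : ℝ) ^ (1 - p⁻¹) * a ^ p⁻¹) ^ 2 := h4
    _ = (n : ℝ) ^ 2 / (n : ℝ) ^ ((2:ℝ)/p) * a ^ ((2:ℝ)/p) := by rw [h5, h6]
    _ = (n : ℝ) ^ 2 * a ^ ((2:ℝ)/p) / (n : ℝ) ^ ((2:ℝ)/p) := by ring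
  rw [le_div_iff₀ hnp] at h7 ⊢
  have hE : ∑ s ∈ (Finset.univ : Finset (Fin n)).powersetCard 2, ∏ i ∈ s, y i
      = (S ^ 2 - Q) / 2 := by linarith
  rw [hE]
  have hn1 : (0:ℝ) ≤ (n:ℝ) - 1 := by
    have : (1:ℝ) ≤ (n:ℝ) := by exact_mod_cast hn
    linarith
  nlinarith [mul_le_mul_of_nonneg_right h2 hnp.le,
    mul_le_mul_of_nonneg_right h7 hn1, hn0, hnp.le]

set_option maxHeartbeats 1000000 in
/-- Equation (12) of the paper: for even `n ≥ 2` and real `p ≥ 2`, the `4`-graph `G`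
of Section 2 satisfies `λ^(p)(G) = 4!·C(n,2)²/(2n)^{4/p}`. -/
theorem lamMax_crossEdges (n : ℕ) (hn : Even n) (h2 : 2 ≤ n) (p : ℝ) (hp : 2 ≤ p) :
    lamMax 4 p (crossEdges n) (fun _ => 1) =
      24 * ((n : ℝ) * ((n : ℝ) - 1) / 2) ^ 2 / (2 * (n : ℝ)) ^ ((4 : ℝ) / p) := by
  have hp0 : (0:ℝ) < p := lt_of_lt_of_le two_pos hp
  have hp1 : (1:ℝ) ≤ p := le_trans one_le_two hp
  have hn1 : 1 ≤ n := le_trans one_le_two h2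
  have hn0 : (0:ℝ) < (n:ℝ) := by exact_mod_cast hn1
  have h2n0 : (0:ℝ) < 2 * (n:ℝ) := by linarith
  set C : ℝ := (n : ℝ) * ((n : ℝ) - 1) / 2 with hC
  have hC0 : 0 ≤ C := by
    have : (1:ℝ) ≤ (n:ℝ) := by exact_mod_cast hn1
    rw [hC]; nlinarith
  set M : ℝ := 24 * C ^ 2 / (2 * (n:ℝ)) ^ ((4:ℝ)/p) with hM
  have h2np : (0:ℝ) < (2 * (n:ℝ)) ^ ((4:ℝ)/p) := Real.rpow_pos_of_pos h2n0 _
  have hM0 : 0 ≤ M := by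
    rw [hM]; positivity
  -- the uniform witness
  set c : ℝ := (2 * (n:ℝ)) ^ (-(1:ℝ)/p) with hc
  have hc0 : 0 < c := Real.rpow_pos_of_pos h2n0 _
  have hcp : c ^ p = (2 * (n:ℝ))⁻¹ := by
    rw [hc, ← Real.rpow_mul h2n0.le, div_mul_cancel₀ _ hp0.ne', Real.rpow_neg_one]
  have hc4 : c ^ (4:ℕ) = ((2 * (n:ℝ)) ^ ((4:ℝ)/p))⁻¹ := by
    rw [hc, ← Real.rpow_natCast ((2 * (n:ℝ)) ^ (-(1:ℝ)/p)) 4, ← Real.rpow_mul h2n0.le,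
      ← Real.rpow_neg h2n0.le]
    congr 1
    push_cast
    ring
  have hnorm : lpNorm p (fun _ : Fin n ⊕ Fin n => c) = 1 := by
    unfold lpNorm
    rw [Finset.sum_const, Finset.card_univ]
    simp only [abs_of_pos hc0, hcp]
    rw [nsmul_eq_mul]
    have hcard : (Fintype.card (Fin n ⊕ Fin n) : ℝ) = 2 * (n:ℝ) := by
      simp [Fintype.card_sum]
      ring
    rw [hcard, mul_inv_cancel₀ h2n0.ne', Real.one_rpow]
  have hpair : ∀ z : ℝ, (∑ s ∈ (Finset.univ : Finset (Fin n)).powersetCard 2,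
      ∏ _i ∈ s, z) = (n.choose 2 : ℝ) * z ^ (2:ℕ) := by
    intro z
    rw [Finset.sum_congr rfl (fun s hs => ?_), Finset.sum_const,
      Finset.card_powersetCard, Finset.card_univ, Fintype.card_fin, nsmul_eq_mul]
    rw [Finset.prod_const, (Finset.mem_powersetCard_univ.1 hs : s.card = 2)]
  have hchoose : (n.choose 2 : ℝ) = C := by
    rw [hC, Nat.cast_choose_two]
  have hval : polyForm 4 (crossEdges n) (fun _ => 1) (fun _ : Fin n ⊕ Fin n => c) = M := by
    unfold polyForm
    simp only [one_mul]
    rw [cross_factor, hpair, hchoose]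
    rw [hM]
    have : (Nat.factorial 4 : ℝ) = 24 := by norm_num [Nat.factorial]
    rw [this]
    have : (C * c ^ (2:ℕ)) * (C * c ^ (2:ℕ)) = C ^ 2 * c ^ (4:ℕ) := by ring
    rw [this, hc4]
    field_simp
  have hub : ∀ t ∈ {t | ∃ x : Fin n ⊕ Fin n → ℝ, lpNorm p x = 1 ∧
      polyForm 4 (crossEdges n) (fun _ => 1) x = t}, t ≤ M := by
    rintro t ⟨x, hx1, rfl⟩
    set yA : Fin n → ℝ := fun i => |x (Sum.inl i)| with hyA
    set yB : Fin n → ℝ := fun i => |x (Sum.inr i)| with hyB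
    have hyA0 : ∀ i, 0 ≤ yA i := fun i => abs_nonneg _
    have hyB0 : ∀ i, 0 ≤ yB i := fun i => abs_nonneg _
    set a := ∑ i, yA i ^ p with ha
    set b := ∑ i, yB i ^ p with hb
    have ha0 : 0 ≤ a := Finset.sum_nonneg fun i _ => Real.rpow_nonneg (hyA0 i) p
    have hb0 : 0 ≤ b := Finset.sum_nonneg fun i _ => Real.rpow_nonneg (hyB0 i) p
    have hsum0 : 0 ≤ ∑ v, |x v| ^ p :=
      Finset.sum_nonneg fun v _ => Real.rpow_nonneg (abs_nonneg _) p
    have hsum1 : ∑ v, |x v| ^ p = 1 := by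
      have h1 : ((∑ v, |x v| ^ p) ^ ((1:ℝ)/p)) ^ p = (1:ℝ) ^ p := by
        rw [show ((∑ v, |x v| ^ p) ^ ((1:ℝ)/p)) = lpNorm p x from rfl, hx1]
      rwa [← Real.rpow_mul hsum0, one_div, inv_mul_cancel₀ hp0.ne', Real.rpow_one,
        Real.one_rpow] at h1
    have hab : a + b = 1 := by
      rw [ha, hb, ← hsum1, Fintype.sum_sum_type]
    -- bound the edge sum
    have habs : ∑ e ∈ crossEdges n, ∏ i ∈ e, x i
        ≤ ∑ e ∈ crossEdges n, ∏ i ∈ e, |x i| := by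
      apply Finset.sum_le_sum
      intro e _
      exact (le_abs_self _).trans (le_of_eq (Finset.abs_prod _ _))
    have hfac : ∑ e ∈ crossEdges n, ∏ i ∈ e, |x i|
        = (∑ s ∈ (Finset.univ : Finset (Fin n)).powersetCard 2, ∏ i ∈ s, yA i) *
          (∑ t ∈ (Finset.univ : Finset (Fin n)).powersetCard 2, ∏ j ∈ t, yB j) :=
      cross_factor n (fun v => |x v|)
    set eA := ∑ s ∈ (Finset.univ : Finset (Fin n)).powersetCard 2, ∏ i ∈ s, yA i with heA
    set eB := ∑ t ∈ (Finset.univ : Finset (Fin n)).powersetCard 2, ∏ j ∈ t, yB j with heB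
    have heA0 : 0 ≤ eA := Finset.sum_nonneg fun s _ =>
      Finset.prod_nonneg fun i _ => hyA0 i
    have hEA : eA ≤ C * a ^ ((2:ℝ)/p) / (n:ℝ) ^ ((2:ℝ)/p) := macl n hn1 p hp1 yA hyA0
    have hEB : eB ≤ C * b ^ ((2:ℝ)/p) / (n:ℝ) ^ ((2:ℝ)/p) := macl n hn1 p hp1 yB hyB0
    have hnp : (0:ℝ) < (n:ℝ) ^ ((2:ℝ)/p) := Real.rpow_pos_of_pos hn0 _
    have hRA : 0 ≤ C * a ^ ((2:ℝ)/p) / (n:ℝ) ^ ((2:ℝ)/p) := by positivity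
    have heB0 : 0 ≤ eB := Finset.sum_nonneg fun s _ =>
      Finset.prod_nonneg fun i _ => hyB0 i
    have hprod : eA * eB ≤ (C * a ^ ((2:ℝ)/p) / (n:ℝ) ^ ((2:ℝ)/p)) *
        (C * b ^ ((2:ℝ)/p) / (n:ℝ) ^ ((2:ℝ)/p)) :=
      mul_le_mul hEA hEB heB0 hRA
    have hnn : (n:ℝ) ^ ((4:ℝ)/p) = ((n:ℝ) ^ ((2:ℝ)/p)) ^ (2:ℕ) := by
      rw [← Real.rpow_natCast ((n:ℝ) ^ ((2:ℝ)/p)) 2, ← Real.rpow_mul hn0.le]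
      congr 1
      push_cast
      ring
    have hn4p : (0:ℝ) < (n:ℝ) ^ ((4:ℝ)/p) := Real.rpow_pos_of_pos hn0 _
    have hre : (C * a ^ ((2:ℝ)/p) / (n:ℝ) ^ ((2:ℝ)/p)) *
        (C * b ^ ((2:ℝ)/p) / (n:ℝ) ^ ((2:ℝ)/p))
        = C ^ 2 * (a * b) ^ ((2:ℝ)/p) / (n:ℝ) ^ ((4:ℝ)/p) := by
      rw [Real.mul_rpow ha0 hb0, hnn]
      ring
    clear_value a b eA eB
    have hab4 : a * b ≤ 1/4 := by nlinarith [sq_nonneg (a - b), hab]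
    have hmono : (a * b) ^ ((2:ℝ)/p) ≤ ((1:ℝ)/4) ^ ((2:ℝ)/p) :=
      Real.rpow_le_rpow (mul_nonneg ha0 hb0) hab4 (by positivity)
    have hquarter : ((1:ℝ)/4) ^ ((2:ℝ)/p) * (2 * (n:ℝ)) ^ ((4:ℝ)/p) = (n:ℝ) ^ ((4:ℝ)/p) := by
      have h14 : ((1:ℝ)/4) = (2:ℝ) ^ (-2:ℝ) := by
        rw [Real.rpow_neg (by norm_num : (0:ℝ) ≤ 2)]
        norm_num [Real.rpow_two]
      rw [Real.mul_rpow (by norm_num : (0:ℝ) ≤ 2) hn0.le, h14,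
        ← Real.rpow_mul (by norm_num : (0:ℝ) ≤ 2)]
      have : (2:ℝ) ^ ((-2:ℝ) * ((2:ℝ)/p)) * ((2:ℝ) ^ ((4:ℝ)/p) * (n:ℝ) ^ ((4:ℝ)/p))
          = ((2:ℝ) ^ ((-2:ℝ) * ((2:ℝ)/p)) * (2:ℝ) ^ ((4:ℝ)/p)) * (n:ℝ) ^ ((4:ℝ)/p) := by ring
      rw [this, ← Real.rpow_add (by norm_num : (0:ℝ) < 2)]
      have : (-2:ℝ) * ((2:ℝ)/p) + (4:ℝ)/p = 0 := by ring
      rw [this, Real.rpow_zero, one_mul]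
    calc polyForm 4 (crossEdges n) (fun _ => 1) x
        = 24 * ∑ e ∈ crossEdges n, ∏ i ∈ e, x i := by
          unfold polyForm
          norm_num [Nat.factorial]
      _ ≤ 24 * (eA * eB) := by
          have := habs.trans (le_of_eq hfac)
          linarith
      _ ≤ 24 * (C ^ 2 * (a * b) ^ ((2:ℝ)/p) / (n:ℝ) ^ ((4:ℝ)/p)) := by
          rw [← hre]
          linarith
      _ ≤ 24 * (C ^ 2 * ((1:ℝ)/4) ^ ((2:ℝ)/p) / (n:ℝ) ^ ((4:ℝ)/p)) := by
          gcongr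
      _ = M := by
          rw [hM, ← hquarter]
          field_simp
  apply le_antisymm
  · exact Real.sSup_le hub hM0
  · exact le_csSup ⟨M, hub⟩ ⟨_, hnorm, hval⟩
end

section
/- Let n ≥ 2 be an even integer, and let G be the 4-graph on 2n vertices whose vertex set is the disjoint union of sets A and B with |A| = |B| = n, and whose edges are all 4-element vertex sets intersecting A in exactly two vertices. Then for every real p ≥ 2, λ_min^(p)(G) ≤ −12 n · C(n,2) / (2n)^{4/p}, where C(n,2) = n(n−1)/2. -/
open Finset

lemma sum_pC_one {α : Type*} [DecidableEq α] (s : Finset α) (f : α → ℝ) :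
    ∑ e ∈ s.powersetCard 1, ∏ i ∈ e, f i = ∑ i ∈ s, f i := by
  rw [Finset.powersetCard_one, Finset.sum_map]
  simp

lemma sum_pC_two {α : Type*} [DecidableEq α] (s : Finset α) (f : α → ℝ) :
    2 * ∑ e ∈ s.powersetCard 2, ∏ i ∈ e, f i
      = (∑ i ∈ s, f i) ^ 2 - ∑ i ∈ s, (f i) ^ 2 := by
  classical
  induction s using Finset.induction_on with
  | empty => rw [Finset.powersetCard_eq_empty.mpr (by simp)]; simp
  | @insert a s ha ih =>
    rw [Finset.powersetCard_succ_insert ha, Finset.sum_union, Finset.sum_image]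
    · have h1 : ∀ e ∈ s.powersetCard 1, ∏ i ∈ insert a e, f i = f a * ∏ i ∈ e, f i := by
        intro e he
        rw [Finset.mem_powersetCard] at he
        exact Finset.prod_insert (fun h => ha (he.1 h))
      rw [Finset.sum_congr rfl h1, ← Finset.mul_sum, sum_pC_one,
        Finset.sum_insert ha, Finset.sum_insert ha]
      linear_combination ih
    · intro e he e' he' h
      rw [Finset.mem_coe, Finset.mem_powersetCard] at he he'
      have h1 : a ∉ e := fun h' => ha (he.1 h')
      have h2 : a ∉ e' := fun h' => ha (he'.1 h')
      rw [← Finset.erase_insert h1, h, Finset.erase_insert h2]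
    · rw [Finset.disjoint_left]
      intro e he himage
      rw [Finset.mem_powersetCard] at he
      obtain ⟨e', _, rfl⟩ := Finset.mem_image.mp himage
      exact ha (he.1 (Finset.mem_insert_self a e'))

lemma prod_disjSum' {α β M : Type*} [CommMonoid M] (s : Finset α) (t : Finset β)
    (f : α ⊕ β → M) :
    ∏ i ∈ s.disjSum t, f i = (∏ a ∈ s, f (Sum.inl a)) * ∏ b ∈ t, f (Sum.inr b) := by
  rw [← Finset.map_inl_disjUnion_map_inr, Finset.prod_disjUnion, Finset.prod_map,
    Finset.prod_map]
  rfl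

lemma mem_crossEdges {n : ℕ} {e : Finset (Fin n ⊕ Fin n)} :
    e ∈ crossEdges n ↔ e.toLeft.card = 2 ∧ e.toRight.card = 2 := by
  have hfe : e.filter (fun v => v.isLeft = true) = e.toLeft.map Function.Embedding.inl := by
    ext v
    cases v <;> simp
  have hcard := Finset.card_toLeft_add_card_toRight (u := e)
  rw [crossEdges, Finset.mem_filter, Finset.mem_powersetCard, hfe, Finset.card_map]
  constructor
  · rintro ⟨⟨-, h4⟩, h2⟩
    exact ⟨h2, by omega⟩
  · rintro ⟨h2, h2'⟩
    exact ⟨⟨Finset.subset_univ _, by omega⟩, h2⟩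

lemma sum_crossEdges {n : ℕ} (f : Fin n ⊕ Fin n → ℝ) :
    ∑ e ∈ crossEdges n, ∏ i ∈ e, f i
      = (∑ a ∈ (Finset.univ : Finset (Fin n)).powersetCard 2, ∏ i ∈ a, f (Sum.inl i))
        * ∑ b ∈ (Finset.univ : Finset (Fin n)).powersetCard 2, ∏ j ∈ b, f (Sum.inr j) := by
  rw [Finset.sum_mul_sum, ← Finset.sum_product']
  refine Finset.sum_nbij' (fun e => (e.toLeft, e.toRight)) (fun p => p.1.disjSum p.2)
    ?_ ?_ ?_ ?_ ?_
  · intro e he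
    rw [mem_crossEdges] at he
    simp [Finset.mem_product, Finset.mem_powersetCard, he.1, he.2]
  · intro p hp
    rw [Finset.mem_product, Finset.mem_powersetCard, Finset.mem_powersetCard] at hp
    rw [mem_crossEdges]
    simp [hp.1.2, hp.2.2]
  · intro e _
    exact Finset.toLeft_disjSum_toRight
  · intro p _
    simp
  · intro e _
    conv_lhs => rw [← Finset.toLeft_disjSum_toRight (u := e), prod_disjSum']



/-- Upper-bound part of equation (13) of the paper: for even `n ≥ 2` and real
`p ≥ 2`, the `4`-graph `G` of Section 2 satisfies
`λ_min^(p)(G) ≤ -12·n·C(n,2)/(2n)^{4/p}`. -/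
theorem lamMin_crossEdges_le (n : ℕ) (hn : Even n) (h2 : 2 ≤ n) (p : ℝ) (hp : 2 ≤ p) :
    lamMin 4 p (crossEdges n) (fun _ => 1) ≤
      -(12 * (n : ℝ) * ((n : ℝ) * ((n : ℝ) - 1) / 2) / (2 * (n : ℝ)) ^ ((4 : ℝ) / p)) := by
  classical
  obtain ⟨k, hk⟩ := hn
  have hk2 : 2 * k = n := by omega
  have hp0 : (0:ℝ) < p := by linarith
  have hp0' : p ≠ 0 := ne_of_gt hp0
  have hn0 : (0:ℝ) < (n:ℝ) := by exact_mod_cast (by omega : 0 < n)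
  have h2n : (0:ℝ) < 2 * (n:ℝ) := by linarith
  have h2n' : (2 * (n:ℝ)) ≠ 0 := ne_of_gt h2n
  -- the witness vector
  set c : ℝ := (2 * (n:ℝ)) ^ (-(1/p)) with hc
  have hcpos : 0 < c := Real.rpow_pos_of_pos h2n _
  set σ : Fin n → ℝ := fun j => if (j : ℕ) < k then 1 else -1 with hσ
  set x : Fin n ⊕ Fin n → ℝ := Sum.elim (fun _ => c) (fun j => c * σ j) with hx
  have hcp : c ^ p = (2 * (n:ℝ))⁻¹ := by
    rw [hc, ← Real.rpow_mul h2n.le]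
    have : -(1/p) * p = -1 := by field_simp
    rw [this, Real.rpow_neg_one]
  have habs : ∀ v, |x v| = c := by
    intro v
    cases v with
    | inl a => simp [hx, abs_of_pos hcpos]
    | inr j =>
      by_cases h : (j:ℕ) < k <;>
        simp [hx, hσ, h, abs_of_pos hcpos]
  have hlp : lpNorm p x = 1 := by
    simp only [lpNorm]
    have hsum : ∑ v : Fin n ⊕ Fin n, |x v| ^ p = 1 := by
      rw [Fintype.sum_sum_type]
      simp only [habs, hcp]
      simp only [Finset.sum_const, Finset.card_univ, Fintype.card_fin, nsmul_eq_mul]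
      field_simp
      ring
    rw [hsum, Real.one_rpow]
  -- the sum of signs
  have hσsum : ∑ j : Fin n, σ j = 0 := by
    have h1 : ∑ j : Fin n, σ j
        = ∑ i ∈ Finset.range n, (if i < k then (1:ℝ) else -1) := by
      rw [hσ]
      exact Fin.sum_univ_eq_sum_range (fun i => if i < k then (1:ℝ) else -1) n
    rw [h1, Finset.range_eq_Ico,
      ← Finset.sum_Ico_consecutive _ (Nat.zero_le k) (by omega : k ≤ n)]
    have hA : ∑ i ∈ Finset.Ico 0 k, (if i < k then (1:ℝ) else -1) = k := by
      rw [Finset.sum_congr rfl (fun i hi => if_pos (Finset.mem_Ico.mp hi).2)]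
      simp
    have hB : ∑ i ∈ Finset.Ico k n, (if i < k then (1:ℝ) else -1) = -((n:ℝ) - k) := by
      rw [Finset.sum_congr rfl
        (fun i hi => if_neg (Nat.not_lt.mpr (Finset.mem_Ico.mp hi).1))]
      rw [Finset.sum_const, Nat.card_Ico, nsmul_eq_mul]
      rw [Nat.cast_sub (by omega : k ≤ n)]
      ring
    rw [hA, hB]
    have : (k:ℝ) + k = n := by exact_mod_cast hk.symm
    linarith
  have hσsq : ∑ j : Fin n, (σ j)^2 = (n:ℝ) := by
    have hone : ∀ j ∈ (Finset.univ : Finset (Fin n)), (σ j)^2 = 1 := by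
      intro j _
      rw [hσ]
      by_cases h : (j:ℕ) < k <;> simp [h]
    rw [Finset.sum_congr rfl hone]
    simp
  have hSb : 2 * ∑ b ∈ (Finset.univ : Finset (Fin n)).powersetCard 2, ∏ j ∈ b, σ j
      = -(n:ℝ) := by
    rw [sum_pC_two, hσsum, hσsq]
    ring
  have hSb' : ∑ b ∈ (Finset.univ : Finset (Fin n)).powersetCard 2, ∏ j ∈ b, σ j
      = -(n:ℝ)/2 := by linarith
  have hc4 : c^(4:ℕ) = ((2 * (n:ℝ)) ^ ((4:ℝ)/p))⁻¹ := by
    rw [hc, ← Real.rpow_natCast ((2*(n:ℝ)) ^ (-(1/p))) 4, ← Real.rpow_mul h2n.le,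
      ← Real.rpow_neg h2n.le]
    congr 1
    push_cast
    ring
  have hpoly : polyForm 4 (crossEdges n) (fun _ => 1) x
      = -(12 * (n : ℝ) * ((n : ℝ) * ((n : ℝ) - 1) / 2) / (2 * (n : ℝ)) ^ ((4 : ℝ) / p)) := by
    simp only [polyForm, one_mul]
    rw [sum_crossEdges]
    have hA : ∑ a ∈ (Finset.univ : Finset (Fin n)).powersetCard 2, ∏ i ∈ a, x (Sum.inl i)
        = (n.choose 2 : ℝ) * c^2 := by
      have hcst : ∀ a ∈ (Finset.univ : Finset (Fin n)).powersetCard 2,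
          ∏ i ∈ a, x (Sum.inl i) = c^2 := by
        intro a ha
        rw [Finset.mem_powersetCard] at ha
        rw [show (fun i => x (Sum.inl i)) = fun _ => c from rfl,
          Finset.prod_const, ha.2]
      rw [Finset.sum_congr rfl hcst, Finset.sum_const, Finset.card_powersetCard,
        Finset.card_univ, Fintype.card_fin, nsmul_eq_mul]
    have hB : ∑ b ∈ (Finset.univ : Finset (Fin n)).powersetCard 2, ∏ j ∈ b, x (Sum.inr j)
        = c^2 * ∑ b ∈ (Finset.univ : Finset (Fin n)).powersetCard 2, ∏ j ∈ b, σ j := by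
      rw [Finset.mul_sum]
      refine Finset.sum_congr rfl fun b hb => ?_
      rw [Finset.mem_powersetCard] at hb
      rw [show (fun j => x (Sum.inr j)) = fun j => c * σ j from rfl,
        Finset.prod_mul_distrib, Finset.prod_const, hb.2]
    have hX : (0:ℝ) < (2*(n:ℝ)) ^ ((4:ℝ)/p) := Real.rpow_pos_of_pos h2n _
    have h4 : ((Nat.factorial 4 : ℕ) : ℝ) = 24 := by norm_num [Nat.factorial]
    have hcX : c^2 * c^2 * ((2*(n:ℝ)) ^ ((4:ℝ)/p)) = 1 := by
      rw [show c^2*c^2 = c^4 by ring, hc4]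
      exact inv_mul_cancel₀ (ne_of_gt hX)
    rw [hA, hB, hSb', Nat.cast_choose_two, h4, ← neg_div, eq_div_iff (ne_of_gt hX)]
    linear_combination (24 * ((n:ℝ)*((n:ℝ)-1)/2) * (-(n:ℝ)/2)) * hcX
  -- bounded below
  have hbdd : BddBelow {t : ℝ | ∃ y : Fin n ⊕ Fin n → ℝ,
      lpNorm p y = 1 ∧ polyForm 4 (crossEdges n) (fun _ => 1) y = t} := by
    refine ⟨-((Nat.factorial 4 : ℝ) * (crossEdges n).card), ?_⟩
    rintro t ⟨y, hy, rfl⟩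
    have h0 : (0:ℝ) ≤ ∑ i, |y i| ^ p :=
      Finset.sum_nonneg fun i _ => Real.rpow_nonneg (abs_nonneg _) _
    have hS : ∑ i, |y i| ^ p = 1 := by
      have h1 : ((∑ i, |y i| ^ p) ^ (1/p)) ^ p = 1 := by
        rw [show ((∑ i, |y i|^p)^(1/p)) = 1 from hy, Real.one_rpow]
      rwa [← Real.rpow_mul h0, one_div, inv_mul_cancel₀ hp0', Real.rpow_one] at h1
    have habs1 : ∀ i, |y i| ≤ 1 := by
      intro i
      by_contra h
      push_neg at h
      have h1 : (1:ℝ) < |y i| ^ p := by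
        calc (1:ℝ) = 1 ^ p := (Real.one_rpow p).symm
        _ < |y i| ^ p := Real.rpow_lt_rpow (by norm_num) h hp0
      have h2' : |y i| ^ p ≤ 1 := hS ▸ Finset.single_le_sum
        (fun i _ => Real.rpow_nonneg (abs_nonneg _) _) (Finset.mem_univ i)
      linarith
    have hedge : ∀ e ∈ crossEdges n, (-1:ℝ) ≤ ∏ i ∈ e, y i := by
      intro e _
      have habs2 : |∏ i ∈ e, y i| ≤ 1 := by
        rw [Finset.abs_prod]
        exact Finset.prod_le_one (fun i _ => abs_nonneg _) (fun i _ => habs1 i)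
      linarith [(abs_le.mp habs2).1]
    simp only [polyForm, one_mul]
    have hsumlb : -(((crossEdges n).card : ℝ)) ≤ ∑ e ∈ crossEdges n, ∏ i ∈ e, y i := by
      calc -(((crossEdges n).card : ℝ)) = ∑ _e ∈ crossEdges n, (-1:ℝ) := by simp
      _ ≤ _ := Finset.sum_le_sum hedge
    have hfac : (0:ℝ) ≤ (Nat.factorial 4 : ℝ) := by positivity
    have hmul := mul_le_mul_of_nonneg_left hsumlb hfac
    calc -((Nat.factorial 4 : ℝ) * (crossEdges n).card)
        = (Nat.factorial 4 : ℝ) * (-(((crossEdges n).card : ℝ))) := by ring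
    _ ≤ _ := hmul
  unfold lamMin
  exact csInf_le hbdd ⟨x, hlp, hpoly⟩
end
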